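/- Every partial action of a monoid M on a set X is the restriction of a total action of M on some superset Y ⊇ X, i.e., there is a set Y, an injection i: X → Y, and a total action of M on Y such that for all u ∈ M and x ∈ X, u·x is defined in X iff u·i(x) ∈ i(X), and in that case i(u·x) = u·i(x). -/
import Mathlib


/-- Every partial action of a monoid `M` on a set `X` is the restriction of a
total action of `M` on a superset `Y ⊇ X`: there are `Y`, an injection
`i : X → Y` and a total `M`-action on `Y` such that `u·x` is defined in `X`
iff `u · i x ∈ i(X)`, and in that case `i (u·x) = u · i x`. -/
theorem stmt_5 {M X : Type u} [Monoid M] (α : M → X → Option X)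
    (hunit : ∀ x, α 1 x = some x)
    (hmul : ∀ (u v : M) (x y : X), α v x = some y → α (u * v) x = α u y) :
    ∃ (Y : Type u) (i : X → Y) (act : M → Y → Y),
      Function.Injective i ∧
      (∀ y, act 1 y = y) ∧
      (∀ (u v : M) (y : Y), act (u * v) y = act u (act v y)) ∧
      (∀ (u : M) (x : X), (∃ z, α u x = some z) ↔ act u (i x) ∈ Set.range i) ∧
      (∀ (u : M) (x z : X), α u x = some z → act u (i x) = i z) := by
  classical
  set base : M × X → M × X → Prop := fun p q =>
    ∃ u v x y, α v x = some y ∧ p = (u * v, x) ∧ q = (u, y) with hbase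
  set s : Setoid (M × X) := ⟨Relation.EqvGen base, Relation.EqvGen.is_equivalence base⟩ with hs
  have hresp : ∀ w : M, ∀ p q : M × X, s.r p q →
      s.r (w * p.1, p.2) (w * q.1, q.2) := by
    intro w p q h
    induction h with
    | rel p q h =>
        obtain ⟨u, v, x, y, hvy, rfl, rfl⟩ := h
        exact Relation.EqvGen.rel _ _ ⟨w * u, v, x, y, hvy, by simp [mul_assoc], rfl⟩
    | refl p => exact Relation.EqvGen.refl _
    | symm _ _ _ ih => exact Relation.EqvGen.symm _ _ ih
    | trans _ _ _ _ _ ih1 ih2 => exact Relation.EqvGen.trans _ _ _ ih1 ih2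
  have hF : ∀ p q : M × X, s.r p q → α p.1 p.2 = α q.1 q.2 := by
    intro p q h
    induction h with
    | rel p q h =>
        obtain ⟨u, v, x, y, hvy, rfl, rfl⟩ := h
        exact hmul u v x y hvy
    | refl p => rfl
    | symm _ _ _ ih => exact ih.symm
    | trans _ _ _ _ _ ih1 ih2 => exact ih1.trans ih2
  set F : Quotient s → Option X := Quotient.lift (fun p => α p.1 p.2) hF with hFdef
  set i : X → Quotient s := fun x => Quotient.mk s (1, x) with hi
  set act : M → Quotient s → Quotient s :=
    fun w => Quotient.map (fun p => (w * p.1, p.2)) (hresp w) with hact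
  have hFi : ∀ x : X, F (i x) = some x := fun x => hunit x
  have hFact : ∀ (u : M) (x : X), F (act u (i x)) = α u x := by
    intro u x
    show α (u * 1) x = α u x
    rw [mul_one]
  have hdef : ∀ (u : M) (x z : X), α u x = some z → act u (i x) = i z := by
    intro u x z hz
    refine Quotient.sound (Relation.EqvGen.rel _ _ ⟨1, u, x, z, hz, by simp, rfl⟩)
  refine ⟨Quotient s, i, act, ?_, ?_, ?_, ?_, hdef⟩
  · intro x x' h
    have := congrArg F h
    rw [hFi, hFi] at this
    exact Option.some.inj this
  · intro y
    refine Quotient.inductionOn y (fun p => ?_)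
    show Quotient.mk s (1 * p.1, p.2) = Quotient.mk s p
    rw [one_mul]
  · intro u v y
    refine Quotient.inductionOn y (fun p => ?_)
    show Quotient.mk s (u * v * p.1, p.2) = Quotient.mk s (u * (v * p.1), p.2)
    rw [mul_assoc]
  · intro u x
    constructor
    · rintro ⟨z, hz⟩
      exact ⟨z, (hdef u x z hz).symm⟩
    · rintro ⟨z, hz⟩
      refine ⟨z, ?_⟩
      have := congrArg F hz
      rw [hFi, hFact] at this
      exact this.symm
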